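/- The IP equation of state satisfies the admissibility conditions: the function h(p,ρ) = 2p/ρ + √(1 + 4(p/ρ)²) on (0,∞)×(0,∞) satisfies, for all p, ρ > 0: (heq1) h(p,ρ) ≥ √(1 + p²/ρ²) + p/ρ, and (heq2) h(p,ρ)·(1/ρ − ∂h/∂p(p,ρ)) < ∂h/∂ρ(p,ρ) < 0. -/

import Mathlib

noncomputable section

/-- The IP EOS `h(p,ρ) = 2p/ρ + √(1 + 4(p/ρ)²)`. -/
def hIP (p ρ : ℝ) : ℝ := 2 * p / ρ + Real.sqrt (1 + 4 * (p / ρ) ^ 2)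

/-- The IP EOS satisfies (heq1) and (heq2). -/
theorem ipEOS_admissible (p ρ : ℝ) (hp : 0 < p) (hρ : 0 < ρ) :
    Real.sqrt (1 + p ^ 2 / ρ ^ 2) + p / ρ ≤ hIP p ρ ∧
    hIP p ρ * (1 / ρ - deriv (fun p' => hIP p' ρ) p) < deriv (fun ρ' => hIP p ρ') ρ ∧
    deriv (fun ρ' => hIP p ρ') ρ < 0 := by
  have hρ0 : ρ ≠ 0 := ne_of_gt hρ
  set s : ℝ := Real.sqrt (1 + 4 * (p / ρ) ^ 2) with hs_def
  have harg : (0:ℝ) < 1 + 4 * (p / ρ) ^ 2 := by positivity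
  have hs2 : s ^ 2 = 1 + 4 * (p / ρ) ^ 2 := Real.sq_sqrt harg.le
  have hs1 : (1:ℝ) ≤ s := by
    rw [show (1:ℝ) = Real.sqrt 1 from (Real.sqrt_one).symm]
    exact Real.sqrt_le_sqrt (by nlinarith [sq_nonneg (p / ρ)])
  have hspos : (0:ℝ) < s := lt_of_lt_of_le one_pos hs1
  -- derivative in p
  have hd1 : HasDerivAt (fun p' : ℝ => p' / ρ) (1 / ρ) p := by
    simpa using (hasDerivAt_id p).div_const ρ
  have hd2 : HasDerivAt (fun p' : ℝ => (p' / ρ) ^ 2) (2 * (p / ρ) * (1 / ρ)) p := by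
    simpa using hd1.fun_pow 2
  have hd3 : HasDerivAt (fun p' : ℝ => 1 + 4 * (p' / ρ) ^ 2)
      (4 * (2 * (p / ρ) * (1 / ρ))) p := (hd2.const_mul 4).const_add 1
  have hd4 := hd3.sqrt (ne_of_gt harg)
  have hd5 : HasDerivAt (fun p' : ℝ => 2 * p' / ρ) (2 / ρ) p := by
    have := ((hasDerivAt_id p).const_mul 2).div_const ρ
    simpa using this
  have hdp : deriv (fun p' => hIP p' ρ) p
      = 2 / ρ + 4 * (2 * (p / ρ) * (1 / ρ)) / (2 * s) := by
    have := (hd5.fun_add hd4).deriv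
    simpa [hIP] using this
  -- derivative in ρ
  have he1 : HasDerivAt (fun ρ' : ℝ => p / ρ') (-(p / ρ ^ 2)) ρ := by
    have := (hasDerivAt_const ρ p).fun_div (hasDerivAt_id ρ) hρ0
    refine this.congr_deriv ?_
    simp only [id]
    field_simp
    ring
  have he2 : HasDerivAt (fun ρ' : ℝ => (p / ρ') ^ 2)
      (2 * (p / ρ) * (-(p / ρ ^ 2))) ρ := by
    simpa using he1.fun_pow 2
  have he3 : HasDerivAt (fun ρ' : ℝ => 1 + 4 * (p / ρ') ^ 2)
      (4 * (2 * (p / ρ) * (-(p / ρ ^ 2)))) ρ := (he2.const_mul 4).const_add 1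
  have he4 := he3.sqrt (ne_of_gt harg)
  have he5 : HasDerivAt (fun ρ' : ℝ => 2 * p / ρ') (-(2 * p / ρ ^ 2)) ρ := by
    have := (hasDerivAt_const ρ (2 * p)).fun_div (hasDerivAt_id ρ) hρ0
    refine this.congr_deriv ?_
    simp only [id]
    field_simp
    ring
  have hdρ : deriv (fun ρ' => hIP p ρ') ρ
      = -(2 * p / ρ ^ 2) + 4 * (2 * (p / ρ) * (-(p / ρ ^ 2))) / (2 * s) := by
    have := (he5.fun_add he4).deriv
    simpa [hIP] using this
  have hdρ_neg : deriv (fun ρ' => hIP p ρ') ρ < 0 := by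
    rw [hdρ]
    have h1 : (0:ℝ) < 2 * p / ρ ^ 2 := by positivity
    have h2 : 4 * (2 * (p / ρ) * -(p / ρ ^ 2)) / (2 * s)
        = -(4 * (2 * (p / ρ) * (p / ρ ^ 2)) / (2 * s)) := by ring
    have h3 : (0:ℝ) ≤ 4 * (2 * (p / ρ) * (p / ρ ^ 2)) / (2 * s) := by positivity
    rw [h2]; linarith
  refine ⟨?_, ?_, hdρ_neg⟩
  · -- heq1
    have ht : Real.sqrt (1 + p ^ 2 / ρ ^ 2) ≤ s := by
      apply Real.sqrt_le_sqrt
      have : p ^ 2 / ρ ^ 2 ≤ 4 * (p / ρ) ^ 2 := by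
        rw [div_pow]; nlinarith [sq_nonneg (p / ρ), div_pow p ρ 2]
      linarith
    have hx : (0:ℝ) < p / ρ := by positivity
    simp only [hIP, ← hs_def]
    have : 2 * p / ρ = p / ρ + p / ρ := by ring
    rw [this]
    linarith
  · -- middle inequality
    rw [hdp, hdρ]
    simp only [hIP, ← hs_def]
    have hx : (0:ℝ) < p / ρ := by positivity
    have key : (2 * p / ρ + s) * (1 / ρ - (2 / ρ + 4 * (2 * (p / ρ) * (1 / ρ)) / (2 * s)))
        - (-(2 * p / ρ ^ 2) + 4 * (2 * (p / ρ) * -(p / ρ ^ 2)) / (2 * s))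
        = (-4 * (p / ρ) - 4 * (p / ρ) ^ 2 / s - s) / ρ := by
      field_simp
      ring
    have hneg : (-4 * (p / ρ) - 4 * (p / ρ) ^ 2 / s - s) / ρ < 0 := by
      apply div_neg_of_neg_of_pos _ hρ
      have h1 : (0:ℝ) < 4 * (p / ρ) := by positivity
      have h2 : (0:ℝ) ≤ 4 * (p / ρ) ^ 2 / s := by positivity
      linarith
    linarith [key, hneg]
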